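/- arXiv:1407.1648 — 2 statements merged into one kernel-verified Lean document; each statement's English description precedes it below -/
import Mathlib

section
/- Let r, s be positive integers, let B_1, B_2, …, B_r be nonnegative real s×s matrices, and let A be an rs×rs nonnegative matrix written as an r×r array of s×s blocks such that in every block row and in every block column each of B_1, B_2, …, B_r appears exactly once. Then the spectral radius of A equals the spectral radius of B_1 + B_2 + ⋯ + B_r. -/
open Finset
open scoped ENNReal NNReal

attribute [local instance] Matrix.linftyOpNormedRing Matrix.linftyOpNormedAlgebra

/-- The spectral radius of a square real matrix: the maximum (supremum) of the
moduli of its complex eigenvalues. -/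
noncomputable def specRad {m : Type*} [Fintype m] [DecidableEq m]
    (M : Matrix m m ℝ) : ℝ :=
  sSup {x : ℝ | ∃ z ∈ spectrum ℂ (M.map (algebraMap ℝ ℂ)), ‖z‖ = x}

/-- The `s × s` block in block-position `(i, j)` of an `rs × rs` matrix. -/
def blockOf (r s : ℕ) (M : Matrix (Fin r × Fin s) (Fin r × Fin s) ℝ)
    (i j : Fin r) : Matrix (Fin s) (Fin s) ℝ :=
  Matrix.of fun a b => M (i, a) (j, b)

lemma specRad_eq_toReal {m : Type*} [Fintype m] [DecidableEq m] [Nonempty m]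
    (M : Matrix m m ℝ) :
    specRad M = (spectralRadius ℂ (M.map (algebraMap ℝ ℂ))).toReal := by
  classical
  set a := M.map (algebraMap ℝ ℂ) with ha
  set T := {x : ℝ | ∃ z ∈ spectrum ℂ a, ‖z‖ = x} with hT
  have hne : (spectrum ℂ a).Nonempty := spectrum.nonempty a
  have hbdd : BddAbove T := by
    refine ⟨‖a‖, ?_⟩
    rintro x ⟨z, hz, rfl⟩
    exact spectrum.norm_le_norm_of_mem hz
  obtain ⟨z₀, hz₀⟩ := hne
  have hTne : T.Nonempty := ⟨‖z₀‖, z₀, hz₀, rfl⟩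
  have hfin : spectralRadius ℂ a ≠ ⊤ :=
    ((spectrum.spectralRadius_le_nnnorm a).trans_lt ENNReal.coe_lt_top).ne
  have h0 : (0 : ℝ) ≤ sSup T :=
    le_trans (norm_nonneg z₀) (le_csSup hbdd ⟨z₀, hz₀, rfl⟩)
  refine le_antisymm (csSup_le hTne ?_) ?_
  · rintro x ⟨z, hz, rfl⟩
    have h1 : (‖z‖₊ : ℝ≥0∞) ≤ spectralRadius ℂ a := by
      rw [spectralRadius]
      exact le_iSup₂ (f := fun (k : ℂ) (_ : k ∈ spectrum ℂ a) => (‖k‖₊ : ℝ≥0∞)) z hz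
    have h2 := ENNReal.toReal_mono hfin h1
    simpa using h2
  · have h2 : spectralRadius ℂ a ≤ ENNReal.ofReal (sSup T) := by
      rw [spectralRadius]
      refine iSup₂_le fun z hz => ?_
      have hzT : ‖z‖ ≤ sSup T := le_csSup hbdd ⟨z, hz, rfl⟩
      calc (‖z‖₊ : ℝ≥0∞) = ENNReal.ofReal ‖z‖ := (ofReal_norm z).symm
        _ ≤ ENNReal.ofReal (sSup T) := ENNReal.ofReal_le_ofReal hzT
    exact ENNReal.toReal_le_of_le_ofReal h0 h2

theorem stmt2 (r s : ℕ) (hr : 0 < r) (hs : 0 < s)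
    (B : Fin r → Matrix (Fin s) (Fin s) ℝ)
    (hB : ∀ t a b, 0 ≤ B t a b)
    (A : Matrix (Fin r × Fin s) (Fin r × Fin s) ℝ)
    (hA : ∀ p q, 0 ≤ A p q)
    -- in every block row and every block column, each of `B 0, …, B (r-1)`
    -- appears exactly once:
    (σ : Fin r → Fin r → Fin r)
    (hblock : ∀ i j, blockOf r s A i j = B (σ i j))
    (hrow : ∀ i, Function.Bijective (σ i))
    (hcol : ∀ j, Function.Bijective fun i => σ i j) :
    specRad A = specRad (∑ t, B t) := by
  classical
  haveI : Nonempty (Fin r) := ⟨⟨0, hr⟩⟩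
  haveI : Nonempty (Fin s) := ⟨⟨0, hs⟩⟩
  set S : Matrix (Fin s) (Fin s) ℝ := ∑ t, B t with hSdef
  have hSapp : ∀ a b, S a b = ∑ t, B t a b := by
    intro a b; simp [hSdef, Matrix.sum_apply]
  have hS : ∀ a b, 0 ≤ S a b := fun a b => by
    rw [hSapp]; exact Finset.sum_nonneg fun t _ => hB t a b
  have hAB : ∀ (i j : Fin r) (a b : Fin s), A (i, a) (j, b) = B (σ i j) a b := by
    intro i j a b
    have h := congrFun (congrFun (hblock i j) a) b
    simpa [blockOf] using h
  -- row sums of A over a block row give S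
  have hrowsum : ∀ (i : Fin r) (a b : Fin s), (∑ j, A (i, a) (j, b)) = S a b := by
    intro i a b
    rw [hSapp]
    simp_rw [hAB]
    exact Fintype.sum_bijective (σ i) (hrow i) _ _ fun k => rfl
  -- nonnegativity of powers of S
  have hSpow : ∀ n, ∀ a b, 0 ≤ (S ^ n) a b := by
    intro n
    induction n with
    | zero =>
      intro a b
      rw [pow_zero, Matrix.one_apply]
      split <;> norm_num
    | succ n ih =>
      intro a b
      rw [pow_succ, Matrix.mul_apply]
      exact Finset.sum_nonneg fun c _ => mul_nonneg (ih a c) (hS c b)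
  -- key: powers of A are nonneg and their block row sums are powers of S
  have key : ∀ n, (∀ p q, 0 ≤ (A ^ n) p q) ∧
      (∀ (i : Fin r) (a b : Fin s), (∑ j, (A ^ n) (i, a) (j, b)) = (S ^ n) a b) := by
    intro n
    induction n with
    | zero =>
      constructor
      · intro p q
        rw [pow_zero, Matrix.one_apply]
        split <;> norm_num
      · intro i a b
        rw [pow_zero]
        by_cases hab : a = b
        · subst hab
          simp [Matrix.one_apply, Prod.ext_iff]
        · simp [Matrix.one_apply, Prod.ext_iff, hab]
    | succ n ih =>
      obtain ⟨ihpos, ihsum⟩ := ih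
      have hpos : ∀ p q, 0 ≤ (A ^ (n + 1)) p q := by
        intro p q
        rw [pow_succ, Matrix.mul_apply]
        exact Finset.sum_nonneg fun k _ => mul_nonneg (ihpos p k) (hA k q)
      refine ⟨hpos, ?_⟩
      intro i a b
      have h1 : (∑ j, (A ^ (n + 1)) (i, a) (j, b))
          = ∑ k : Fin r × Fin s, (A ^ n) (i, a) k * (∑ j, A k (j, b)) := by
        simp_rw [pow_succ, Matrix.mul_apply, Finset.mul_sum]
        rw [Finset.sum_comm]
      rw [h1]
      have h2 : ∀ k : Fin r × Fin s, (∑ j, A k (j, b)) = S k.2 b :=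
        fun k => hrowsum k.1 k.2 b
      simp_rw [h2]
      rw [Fintype.sum_prod_type]
      calc (∑ k : Fin r, ∑ c : Fin s, (A ^ n) (i, a) (k, c) * S c b)
          = ∑ c : Fin s, (∑ k : Fin r, (A ^ n) (i, a) (k, c)) * S c b := by
            rw [Finset.sum_comm]; simp_rw [Finset.sum_mul]
        _ = ∑ c : Fin s, (S ^ n) a c * S c b := by
            refine Finset.sum_congr rfl fun c _ => ?_
            rw [ihsum i a c]
        _ = (S ^ (n + 1)) a b := by rw [pow_succ, Matrix.mul_apply]
  -- complexifications
  set f : ℝ →+* ℂ := algebraMap ℝ ℂ with hf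
  set Ac := A.map f with hAc
  set Sc := S.map f with hSc
  have hmapA : ∀ n : ℕ, Ac ^ n = (A ^ n).map f := by
    intro n
    rw [hAc, ← RingHom.mapMatrix_apply, ← map_pow, RingHom.mapMatrix_apply]
  have hmapS : ∀ n : ℕ, Sc ^ n = (S ^ n).map f := by
    intro n
    rw [hSc, ← RingHom.mapMatrix_apply, ← map_pow, RingHom.mapMatrix_apply]
  -- the norms of the powers agree
  have hnorm : ∀ n : ℕ, ‖Ac ^ n‖₊ = ‖Sc ^ n‖₊ := by
    intro n
    obtain ⟨hApos, hAsum⟩ := key n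
    rw [hmapA, hmapS, Matrix.linfty_opNNNorm_def, Matrix.linfty_opNNNorm_def]
    have hrow_eq : ∀ i : Fin r, ∀ a : Fin s,
        (∑ q : Fin r × Fin s, ‖((A ^ n).map f) (i, a) q‖₊)
          = ∑ b : Fin s, ‖((S ^ n).map f) a b‖₊ := by
      intro i a
      apply NNReal.coe_injective
      push_cast [coe_nnnorm]
      simp only [Matrix.map_apply, hf, Complex.coe_algebraMap, Complex.norm_real]
      calc (∑ q : Fin r × Fin s, ‖(A ^ n) (i, a) q‖)
          = ∑ q : Fin r × Fin s, (A ^ n) (i, a) q := by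
            refine Finset.sum_congr rfl fun q _ => Real.norm_of_nonneg (hApos _ q)
        _ = ∑ b : Fin s, ∑ j : Fin r, (A ^ n) (i, a) (j, b) := by
            rw [Fintype.sum_prod_type, Finset.sum_comm]
        _ = ∑ b : Fin s, (S ^ n) a b := by
            exact Finset.sum_congr rfl fun b _ => hAsum i a b
        _ = ∑ b : Fin s, ‖(S ^ n) a b‖ := by
            exact Finset.sum_congr rfl fun b _ => (Real.norm_of_nonneg (hSpow n a b)).symm
    have huniv : (Finset.univ : Finset (Fin r × Fin s)) = Finset.univ ×ˢ Finset.univ :=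
      (Finset.univ_product_univ).symm
    rw [huniv, Finset.sup_product_left]
    calc (Finset.univ.sup fun i : Fin r =>
            Finset.univ.sup fun a : Fin s => ∑ q : Fin r × Fin s, ‖((A ^ n).map f) (i, a) q‖₊)
        = Finset.univ.sup fun _ : Fin r =>
            Finset.univ.sup fun a : Fin s => ∑ b : Fin s, ‖((S ^ n).map f) a b‖₊ := by
          refine Finset.sup_congr rfl fun i _ => Finset.sup_congr rfl fun a _ => hrow_eq i a
      _ = Finset.univ.sup fun a : Fin s => ∑ b : Fin s, ‖((S ^ n).map f) a b‖₊ :=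
          Finset.sup_const Finset.univ_nonempty _
  -- Gelfand's formula: equal spectral radii
  have hsr : spectralRadius ℂ Ac = spectralRadius ℂ Sc := by
    have h1 := spectrum.pow_nnnorm_pow_one_div_tendsto_nhds_spectralRadius Ac
    have h2 := spectrum.pow_nnnorm_pow_one_div_tendsto_nhds_spectralRadius Sc
    simp_rw [hnorm] at h1
    exact tendsto_nhds_unique h1 h2
  rw [specRad_eq_toReal A, specRad_eq_toReal S]
  exact congrArg ENNReal.toReal hsr
end

section
/- For every integer n ≥ 3, the spectral radius of the divided compacted matrix DC_n equals the spectral radius of the super compacted matrix SC_n. -/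
/-- Entry `(i+1, j+1)` of the compacted matrix `C_n` of rank `n` (zero-indexed
`i, j ∈ {0, …, 2n-2}` corresponding to one-indexed indices in `{1, …, 2n-1}`). -/
def Cfun (n i j : ℕ) : ℝ :=
  if i + 1 ≤ n - 3 ∧ j = i + 1 then 1
  else if i = n - 3 ∧ (j = n - 2 ∨ j = n - 1) then 1
  else if i = n - 2 ∧ j + 1 ≤ n then (n : ℝ) - 2
  else if i = n - 2 ∧ n ≤ j then (n : ℝ) - 1
  else if i = n - 1 then 1
  else if i = n ∧ j + 2 ≤ n then (n : ℝ) - 1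
  else if i = n ∧ n - 1 ≤ j then (n : ℝ) - 2
  else if i = n + 1 ∧ (j = n - 1 ∨ j = n) then 1
  else if n + 2 ≤ i ∧ j + 1 = i then 1
  else 0

/-- The compacted matrix `C_n` of rank `n`, of size `(2n-1) × (2n-1)`. -/
def Cmat (n : ℕ) : Matrix (Fin (2 * n - 1)) (Fin (2 * n - 1)) ℝ :=
  Matrix.of fun i j => Cfun n i.val j.val

/-- Entry `(i+1, j+1)` of the divided compacted matrix `DC_n` of rank `n`
(zero-indexed `i, j ∈ {0, …, 2n-1}`). -/
def DCfun (n i j : ℕ) : ℝ :=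
  if i + 2 ≤ n then (if j + 1 ≤ n then Cfun n i j else Cfun n i (j - 1))
  else if i = n - 1 then (if j + 1 ≤ n then 1 else 0)
  else if i = n then (if j + 1 ≤ n then 0 else 1)
  else (if j + 1 ≤ n then Cfun n (i - 1) j else Cfun n (i - 1) (j - 1))

/-- The divided compacted matrix `DC_n` of rank `n`, of size `2n × 2n`. -/
def DCmat (n : ℕ) : Matrix (Fin (2 * n)) (Fin (2 * n)) ℝ :=
  Matrix.of fun i j => DCfun n i.val j.val

/-- Entry `(i+1, j+1)` of the super compacted matrix `SC_n` of rank `n`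
(zero-indexed `i, j ∈ {0, …, n-1}`). -/
def SCfun (n i j : ℕ) : ℝ :=
  if i + 3 ≤ n ∧ j = i + 1 then 1
  else if i = n - 1 then 1
  else if i = n - 3 ∧ j = n - 1 then 2
  else if i = n - 2 ∧ j + 2 ≤ n then 2 * (n : ℝ) - 3
  else if i = n - 2 ∧ j = n - 1 then 2 * (n : ℝ) - 4
  else 0

/-- The super compacted matrix `SC_n` of rank `n`, of size `n × n`. -/
def SCmat (n : ℕ) : Matrix (Fin n) (Fin n) ℝ :=
  Matrix.of fun i j => SCfun n i.val j.val


section SpecHelpers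

open Matrix Polynomial

variable {m : Type*} [Fintype m] [DecidableEq m]

lemma mem_spec_iff_det (M : Matrix m m ℂ) (z : ℂ) :
    z ∈ spectrum ℂ M ↔ (z • (1 : Matrix m m ℂ) - M).det = 0 := by
  rw [spectrum.mem_iff, Algebra.algebraMap_eq_smul_one]
  simp [Matrix.isUnit_iff_isUnit_det, isUnit_iff_ne_zero]

lemma eval_charpoly' (M : Matrix m m ℂ) (z : ℂ) :
    (Matrix.charpoly M).eval z = (z • (1 : Matrix m m ℂ) - M).det := by
  have h1 := RingHom.map_det (Polynomial.evalRingHom z) (charmatrix M)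
  rw [RingHom.mapMatrix_apply] at h1
  have h2 : (charmatrix M).map (Polynomial.eval z)
      = z • (1 : Matrix m m ℂ) - M := by
    ext i j
    by_cases h : i = j
    · subst h
      simp [Matrix.charmatrix_apply_eq, Matrix.one_apply]
    · simp [Matrix.charmatrix_apply_ne _ _ _ h, Matrix.one_apply_ne h]
  simpa [Matrix.charpoly, h2] using h1

lemma spec_subset_roots (M : Matrix m m ℂ) :
    spectrum ℂ M ⊆ {z | (Matrix.charpoly M).IsRoot z} := by
  intro z hz
  simp only [Set.mem_setOf_eq, Polynomial.IsRoot, eval_charpoly']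
  exact (mem_spec_iff_det M z).mp hz

lemma spec_finite (M : Matrix m m ℂ) : (spectrum ℂ M).Finite :=
  (Polynomial.finite_setOf_isRoot (M.charpoly_monic.ne_zero)).subset (spec_subset_roots M)

lemma eq_one_of_mem_spectrum_one [Nonempty m] {z : ℂ}
    (hz : z ∈ spectrum ℂ (1 : Matrix m m ℂ)) : z = 1 := by
  rw [mem_spec_iff_det] at hz
  have h : z • (1 : Matrix m m ℂ) - 1 = (z - 1) • 1 := by
    rw [sub_smul, one_smul]
  rw [h, Matrix.det_smul, Matrix.det_one, mul_one, pow_eq_zero_iff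
    (Fintype.card_ne_zero)] at hz
  exact sub_eq_zero.mp hz

lemma spec_fromBlocks {k l : Type*} [Fintype k] [DecidableEq k] [Fintype l] [DecidableEq l]
    (P : Matrix k k ℂ) (Q : Matrix l l ℂ) :
    spectrum ℂ (Matrix.fromBlocks P 0 0 Q) = spectrum ℂ P ∪ spectrum ℂ Q := by
  ext z
  have h : z • (1 : Matrix (k ⊕ l) (k ⊕ l) ℂ) - Matrix.fromBlocks P 0 0 Q
      = Matrix.fromBlocks (z • 1 - P) 0 0 (z • 1 - Q) := by
    rw [← Matrix.fromBlocks_one, Matrix.fromBlocks_smul]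
    ext (i | i) (j | j) <;> simp
  simp only [mem_spec_iff_det, Set.mem_union, h, Matrix.det_fromBlocks_zero₂₁, mul_eq_zero]

end SpecHelpers
section Comb

open Matrix

/-- Power formula for the auxiliary matrix `N`. -/
def NPfun (n k i j : ℕ) : ℝ :=
  if i = 0 then (if j + k ≤ n then 1 else 0)
  else if i < k then (if j + k = n + i then 1 else 0)
  else if i = k then (if j = 0 then 0 else -1)
  else if j + k = i then 1 else 0

def NPmat (n k : ℕ) : Matrix (Fin n) (Fin n) ℝ :=
  Matrix.of fun i j => NPfun n k i.val j.val

def Jmat (n : ℕ) : Matrix (Fin n) (Fin n) ℝ :=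
  Matrix.of fun i j => if (i : ℕ) + (j : ℕ) + 1 = n then 1 else 0

def Amat (n : ℕ) : Matrix (Fin n) (Fin n) ℝ :=
  Matrix.of fun i j => DCfun n i.val j.val

def Bmat (n : ℕ) : Matrix (Fin n) (Fin n) ℝ :=
  Matrix.of fun i j => DCfun n i.val (n + j.val)

def Cmat' (n : ℕ) : Matrix (Fin n) (Fin n) ℝ :=
  Matrix.of fun i j => DCfun n (n + i.val) j.val

def Dmat (n : ℕ) : Matrix (Fin n) (Fin n) ℝ :=
  Matrix.of fun i j => DCfun n (n + i.val) (n + j.val)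

/- Row descriptions of `Cfun`. -/
lemma crow1 {n i : ℕ} (hn : 3 ≤ n) (hi : i + 4 ≤ n) (j : ℕ) :
    Cfun n i j = if j = i + 1 then 1 else 0 := by
  simp only [Cfun]; split_ifs <;> first | rfl | omega

lemma crow2 {n i : ℕ} (hn : 3 ≤ n) (hi : i + 3 = n) (j : ℕ) :
    Cfun n i j = if j + 2 = n ∨ j + 1 = n then 1 else 0 := by
  simp only [Cfun]; split_ifs <;> first | rfl | omega

lemma crow3 {n i : ℕ} (hn : 3 ≤ n) (hi : i + 2 = n) (j : ℕ) :
    Cfun n i j = if j + 1 ≤ n then (n : ℝ) - 2 else (n : ℝ) - 1 := by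
  simp only [Cfun]; split_ifs <;> first | rfl | omega

lemma crow4 {n i : ℕ} (hn : 3 ≤ n) (hi : i + 1 = n) (j : ℕ) :
    Cfun n i j = 1 := by
  simp only [Cfun]; split_ifs <;> first | rfl | omega

lemma crow5 {n i : ℕ} (hn : 3 ≤ n) (hi : i = n) (j : ℕ) :
    Cfun n i j = if j + 2 ≤ n then (n : ℝ) - 1 else (n : ℝ) - 2 := by
  simp only [Cfun]; split_ifs <;> first | rfl | omega

lemma crow6 {n i : ℕ} (hn : 3 ≤ n) (hi : i = n + 1) (j : ℕ) :
    Cfun n i j = if j + 1 = n ∨ j = n then 1 else 0 := by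
  simp only [Cfun]; split_ifs <;> first | rfl | omega

lemma crow7 {n i : ℕ} (hn : 3 ≤ n) (hi : n + 2 ≤ i) (j : ℕ) :
    Cfun n i j = if j + 1 = i then 1 else 0 := by
  simp only [Cfun]; split_ifs <;> first | rfl | omega

/- Row descriptions of `DCfun`, uniform in the column index. -/
lemma dcrow1 {n i : ℕ} (hn : 3 ≤ n) (hi : i + 4 ≤ n) (j : ℕ) :
    DCfun n i j = if j = i + 1 then 1 else 0 := by
  rw [DCfun, if_pos (by omega)]
  by_cases h : j + 1 ≤ n
  · rw [if_pos h, crow1 hn hi]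
  · rw [if_neg h, crow1 hn hi]; split_ifs <;> first | rfl | omega

lemma dcrow2 {n i : ℕ} (hn : 3 ≤ n) (hi : i + 3 = n) (j : ℕ) :
    DCfun n i j = if j + 2 = n ∨ j + 1 = n ∨ j = n then 1 else 0 := by
  rw [DCfun, if_pos (by omega)]
  by_cases h : j + 1 ≤ n
  · rw [if_pos h, crow2 hn hi]; split_ifs <;> first | rfl | omega
  · rw [if_neg h, crow2 hn hi]; split_ifs <;> first | rfl | omega

lemma dcrow3 {n i : ℕ} (hn : 3 ≤ n) (hi : i + 2 = n) (j : ℕ) :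
    DCfun n i j = if j ≤ n then (n : ℝ) - 2 else (n : ℝ) - 1 := by
  rw [DCfun, if_pos (by omega)]
  by_cases h : j + 1 ≤ n
  · rw [if_pos h, crow3 hn hi]; split_ifs <;> first | rfl | omega
  · rw [if_neg h, crow3 hn hi]; split_ifs <;> first | rfl | omega

lemma dcrow4 {n i : ℕ} (hn : 3 ≤ n) (hi : i + 1 = n) (j : ℕ) :
    DCfun n i j = if j + 1 ≤ n then 1 else 0 := by
  rw [DCfun, if_neg (by omega), if_pos (by omega)]

lemma dcrow5 {n : ℕ} (hn : 3 ≤ n) (j : ℕ) :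
    DCfun n n j = if j + 1 ≤ n then 0 else 1 := by
  rw [DCfun, if_neg (by omega), if_neg (by omega), if_pos (by omega)]

lemma dcrow6 {n : ℕ} (hn : 3 ≤ n) (j : ℕ) :
    DCfun n (n + 1) j = if j + 2 ≤ n then (n : ℝ) - 1 else (n : ℝ) - 2 := by
  rw [DCfun, if_neg (by omega), if_neg (by omega), if_neg (by omega)]
  by_cases h : j + 1 ≤ n
  · rw [if_pos h]
    rw [crow5 hn (by omega)]
  · rw [if_neg h, crow5 hn (by omega)]; split_ifs <;> first | rfl | omega

lemma dcrow7 {n : ℕ} (hn : 3 ≤ n) (j : ℕ) :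
    DCfun n (n + 2) j = if j + 1 = n ∨ j = n ∨ j = n + 1 then 1 else 0 := by
  rw [DCfun, if_neg (by omega), if_neg (by omega), if_neg (by omega)]
  by_cases h : j + 1 ≤ n
  · rw [if_pos h, crow6 hn (by omega)]; split_ifs <;> first | rfl | omega
  · rw [if_neg h, crow6 hn (by omega)]; split_ifs <;> first | rfl | omega

lemma dcrow8 {n i : ℕ} (hn : 3 ≤ n) (hi : 3 ≤ i) (hi' : i < n) (j : ℕ) :
    DCfun n (n + i) j = if j = n + i - 1 then 1 else 0 := by
  rw [DCfun, if_neg (by omega), if_neg (by omega), if_neg (by omega)]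
  by_cases h : j + 1 ≤ n
  · rw [if_pos h, crow7 hn (by omega)]; split_ifs <;> first | rfl | omega
  · rw [if_neg h, crow7 hn (by omega)]; split_ifs <;> first | rfl | omega

/- Row descriptions of `SCfun`. -/
lemma srow1 {n i : ℕ} (hn : 3 ≤ n) (hi : i + 4 ≤ n) (j : ℕ) :
    SCfun n i j = if j = i + 1 then 1 else 0 := by
  simp only [SCfun]; split_ifs <;> first | rfl | omega

lemma srow2 {n i : ℕ} (hn : 3 ≤ n) (hi : i + 3 = n) (j : ℕ) :
    SCfun n i j = if j + 2 = n then 1 else if j + 1 = n then 2 else 0 := by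
  simp only [SCfun]; split_ifs <;> first | rfl | omega

lemma srow3 {n i : ℕ} (hn : 3 ≤ n) (hi : i + 2 = n) {j : ℕ} (hj : j < n) :
    SCfun n i j = if j + 2 ≤ n then 2 * (n : ℝ) - 3 else 2 * (n : ℝ) - 4 := by
  simp only [SCfun]; split_ifs <;> first | rfl | omega

lemma srow4 {n i : ℕ} (hn : 3 ≤ n) (hi : i + 1 = n) (j : ℕ) :
    SCfun n i j = 1 := by
  simp only [SCfun]; split_ifs <;> first | rfl | omega

end Comb
section Keys

lemma key1 {n i j : ℕ} (hn : 3 ≤ n) (hi : i < n) (hj : j < n) :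
    DCfun n i j + DCfun n i (n + (n - 1 - j)) = SCfun n i j := by
  rcases (by omega : i + 4 ≤ n ∨ i + 3 = n ∨ i + 2 = n ∨ i + 1 = n) with h | h | h | h
  · rw [dcrow1 hn h, dcrow1 hn h, srow1 hn h]
    split_ifs <;> first | exact False.elim ‹False› | omega | (exfalso; omega) | norm_num | simp_all
  · rw [dcrow2 hn h, dcrow2 hn h, srow2 hn h]
    split_ifs <;> first | exact False.elim ‹False› | omega | (exfalso; omega) | norm_num | simp_all
  · rw [dcrow3 hn h, dcrow3 hn h, srow3 hn h hj]
    split_ifs <;> first | exact False.elim ‹False› | omega | (exfalso; omega) | ring | norm_num | simp_all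
  · rw [dcrow4 hn h, dcrow4 hn h, srow4 hn h]
    split_ifs <;> first | exact False.elim ‹False› | omega | (exfalso; omega) | norm_num | simp_all

lemma key2 {n i j : ℕ} (hn : 3 ≤ n) (hi : i < n) (hj : j < n) :
    DCfun n i (n - 1 - j) - DCfun n i (n + j) = NPfun n 1 (n - 1 - i) j := by
  rcases (by omega : i + 4 ≤ n ∨ i + 3 = n ∨ i + 2 = n ∨ i + 1 = n) with h | h | h | h <;>
    simp only [NPfun]
  · rw [dcrow1 hn h, dcrow1 hn h]
    split_ifs <;> first | exact False.elim ‹False› | omega | (exfalso; omega) | norm_num | simp_all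
  · rw [dcrow2 hn h, dcrow2 hn h]
    split_ifs <;> first | exact False.elim ‹False› | omega | (exfalso; omega) | norm_num | simp_all
  · rw [dcrow3 hn h, dcrow3 hn h]
    split_ifs <;> first | exact False.elim ‹False› | omega | (exfalso; omega) | ring | norm_num | simp_all
  · rw [dcrow4 hn h, dcrow4 hn h]
    split_ifs <;> first | exact False.elim ‹False› | omega | (exfalso; omega) | norm_num | simp_all

lemma key3 {n i j : ℕ} (hn : 3 ≤ n) (hi : i < n) (hj : j < n) :
    DCfun n (n + i) j + DCfun n (n + i) (n + (n - 1 - j)) = SCfun n (n - 1 - i) j := by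
  rcases (by omega : i = 0 ∨ i = 1 ∨ i = 2 ∨ (3 ≤ i ∧ i < n)) with h | h | h | h
  · subst h
    simp only [Nat.add_zero]
    rw [dcrow5 hn, dcrow5 hn, srow4 hn (by omega)]
    split_ifs <;> first | exact False.elim ‹False› | omega | (exfalso; omega) | norm_num | simp_all
  · subst h
    rw [show n + 1 = n + 1 from rfl, dcrow6 hn, dcrow6 hn, srow3 hn (by omega) hj]
    split_ifs <;> first | exact False.elim ‹False› | omega | (exfalso; omega) | ring | norm_num | simp_all
  · subst h
    rw [dcrow7 hn, dcrow7 hn, srow2 hn (by omega)]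
    split_ifs <;> first | exact False.elim ‹False› | omega | (exfalso; omega) | norm_num | simp_all
  · rw [dcrow8 hn h.1 h.2, dcrow8 hn h.1 h.2, srow1 hn (by omega)]
    split_ifs <;> first | exact False.elim ‹False› | omega | (exfalso; omega) | norm_num | simp_all

lemma key4 {n i j : ℕ} (hn : 3 ≤ n) (hi : i < n) (hj : j < n) :
    DCfun n (n + i) (n - 1 - j) - DCfun n (n + i) (n + j) = -NPfun n 1 i j := by
  rcases (by omega : i = 0 ∨ i = 1 ∨ i = 2 ∨ (3 ≤ i ∧ i < n)) with h | h | h | h <;>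
    simp only [NPfun]
  · subst h
    simp only [Nat.add_zero]
    rw [dcrow5 hn, dcrow5 hn]
    split_ifs <;> first | exact False.elim ‹False› | omega | (exfalso; omega) | norm_num | simp_all
  · subst h
    rw [dcrow6 hn, dcrow6 hn]
    split_ifs <;> first | exact False.elim ‹False› | omega | (exfalso; omega) | ring | norm_num | simp_all
  · subst h
    rw [dcrow7 hn, dcrow7 hn]
    split_ifs <;> first | exact False.elim ‹False› | omega | (exfalso; omega) | norm_num | simp_all
  · rw [dcrow8 hn h.1 h.2, dcrow8 hn h.1 h.2]
    split_ifs <;> first | exact False.elim ‹False› | omega | (exfalso; omega) | norm_num | simp_all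

end Keys
section Mats

open Matrix

lemma sum_mul_ite {n : ℕ} (f : Fin n → ℝ) (c : Fin n) (v : ℝ) :
    (∑ t : Fin n, f t * if t = c then v else 0) = f c * v := by
  rw [Finset.sum_eq_single c]
  · rw [if_pos rfl]
  · intro t _ ht; rw [if_neg ht, mul_zero]
  · intro h; exact absurd (Finset.mem_univ c) h

lemma mulJ {n : ℕ} (hn : 3 ≤ n) (X : Matrix (Fin n) (Fin n) ℝ) (i j : Fin n) :
    (X * Jmat n) i j = X i ⟨n - 1 - (j : ℕ), by omega⟩ := by
  have hc : ∀ t : Fin n, ((t : ℕ) + (j : ℕ) + 1 = n) ↔ (t = ⟨n - 1 - (j : ℕ), by omega⟩) := by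
    intro t
    rw [Fin.ext_iff]
    constructor <;> (intro h; simp only [] at *; omega)
  simp only [Matrix.mul_apply, Jmat, Matrix.of_apply]
  calc (∑ t : Fin n, X i t * if (t : ℕ) + (j : ℕ) + 1 = n then (1:ℝ) else 0)
      = ∑ t : Fin n, X i t * if t = ⟨n - 1 - (j : ℕ), by omega⟩ then (1:ℝ) else 0 := by
        refine Finset.sum_congr rfl fun t _ => ?_
        rw [if_congr (hc t) rfl rfl]
    _ = X i ⟨n - 1 - (j : ℕ), by omega⟩ := by rw [sum_mul_ite, mul_one]

lemma Jmul {n : ℕ} (hn : 3 ≤ n) (X : Matrix (Fin n) (Fin n) ℝ) (i j : Fin n) :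
    (Jmat n * X) i j = X ⟨n - 1 - (i : ℕ), by omega⟩ j := by
  have hc : ∀ t : Fin n, ((i : ℕ) + (t : ℕ) + 1 = n) ↔ (t = ⟨n - 1 - (i : ℕ), by omega⟩) := by
    intro t
    rw [Fin.ext_iff]
    constructor <;> (intro h; simp only [] at *; omega)
  simp only [Matrix.mul_apply, Jmat, Matrix.of_apply]
  calc (∑ t : Fin n, (if (i : ℕ) + (t : ℕ) + 1 = n then (1:ℝ) else 0) * X t j)
      = ∑ t : Fin n, X t j * if t = ⟨n - 1 - (i : ℕ), by omega⟩ then (1:ℝ) else 0 := by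
        refine Finset.sum_congr rfl fun t _ => ?_
        rw [if_congr (hc t) rfl rfl, mul_comm]
    _ = X ⟨n - 1 - (i : ℕ), by omega⟩ j := by rw [sum_mul_ite, mul_one]

lemma JJ {n : ℕ} (hn : 3 ≤ n) : Jmat n * Jmat n = 1 := by
  ext i j
  rw [mulJ hn, Matrix.one_apply]
  simp only [Jmat, Matrix.of_apply]
  have : ((i : ℕ) + (n - 1 - (j : ℕ)) + 1 = n) ↔ (i = j) := by
    rw [Fin.ext_iff]; constructor <;> (intro h; omega)
  rw [if_congr this rfl rfl]

lemma key1M {n : ℕ} (hn : 3 ≤ n) : Amat n + Bmat n * Jmat n = SCmat n := by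
  ext i j
  rw [Matrix.add_apply, mulJ hn]
  exact key1 hn i.isLt j.isLt

lemma key2M {n : ℕ} (hn : 3 ≤ n) : Amat n * Jmat n - Bmat n = Jmat n * NPmat n 1 := by
  ext i j
  rw [Matrix.sub_apply, mulJ hn, Jmul hn]
  exact key2 hn i.isLt j.isLt

lemma key3M {n : ℕ} (hn : 3 ≤ n) : Cmat' n + Dmat n * Jmat n = Jmat n * SCmat n := by
  ext i j
  rw [Matrix.add_apply, mulJ hn, Jmul hn]
  exact key3 hn i.isLt j.isLt

lemma key4M {n : ℕ} (hn : 3 ≤ n) : Cmat' n * Jmat n - Dmat n = -(NPmat n 1) := by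
  ext i j
  rw [Matrix.sub_apply, mulJ hn, Matrix.neg_apply]
  exact key4 hn i.isLt j.isLt

/-- The real similarity matrix. -/
def SmatR (n : ℕ) : Matrix (Fin n ⊕ Fin n) (Fin n ⊕ Fin n) ℝ :=
  Matrix.fromBlocks 1 (Jmat n) (Jmat n) (-1)

lemma blocksR {n : ℕ} (hn : 3 ≤ n) :
    Matrix.fromBlocks (Amat n) (Bmat n) (Cmat' n) (Dmat n) * SmatR n
      = SmatR n * Matrix.fromBlocks (SCmat n) 0 0 (NPmat n 1) := by
  rw [SmatR, Matrix.fromBlocks_multiply, Matrix.fromBlocks_multiply]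
  have e1 : Amat n * 1 + Bmat n * Jmat n = 1 * SCmat n + Jmat n * 0 := by
    rw [Matrix.mul_one, Matrix.one_mul, Matrix.mul_zero, add_zero, key1M hn]
  have e2 : Amat n * Jmat n + Bmat n * (-1) = 1 * 0 + Jmat n * NPmat n 1 := by
    rw [Matrix.mul_neg, Matrix.mul_one, Matrix.one_mul, zero_add, ← sub_eq_add_neg, key2M hn]
  have e3 : Cmat' n * 1 + Dmat n * Jmat n = Jmat n * SCmat n + (-1) * 0 := by
    rw [Matrix.mul_one, Matrix.mul_zero, add_zero, key3M hn]
  have e4 : Cmat' n * Jmat n + Dmat n * (-1) = Jmat n * 0 + (-1) * NPmat n 1 := by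
    rw [Matrix.mul_neg, Matrix.mul_one, Matrix.mul_zero, zero_add, Matrix.neg_mul,
      Matrix.one_mul, ← sub_eq_add_neg, key4M hn]
  rw [e1, e2, e3, e4]

lemma SSR {n : ℕ} (hn : 3 ≤ n) :
    SmatR n * SmatR n = (2 : ℝ) • (1 : Matrix (Fin n ⊕ Fin n) (Fin n ⊕ Fin n) ℝ) := by
  rw [SmatR, Matrix.fromBlocks_multiply, JJ hn, ← Matrix.fromBlocks_one, Matrix.fromBlocks_smul]
  congr 1 <;> simp [two_smul]

end Mats
section Npow

open Matrix

set_option maxHeartbeats 2000000 in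
lemma Nstep {n : ℕ} (hn : 3 ≤ n) (k : ℕ) (hk1 : 1 ≤ k) (hk : k < n) :
    NPmat n k * NPmat n 1 = NPmat n (k + 1) := by
  ext i j
  rw [Matrix.mul_apply]
  rcases (by omega : (j : ℕ) = 0 ∨ ((j : ℕ) + 1 = n) ∨ (1 ≤ (j : ℕ) ∧ (j : ℕ) + 1 < n))
    with hj | hj | hj
  · have hcol : ∀ t : Fin n, NPmat n 1 t j = if t = (⟨0, by omega⟩ : Fin n) then (1:ℝ) else 0 := by
      intro t
      simp only [NPmat, NPfun, Matrix.of_apply, Fin.ext_iff]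
      split_ifs <;> first | rfl | omega
    calc (∑ t : Fin n, NPmat n k i t * NPmat n 1 t j)
        = ∑ t : Fin n, NPmat n k i t * if t = (⟨0, by omega⟩ : Fin n) then (1:ℝ) else 0 :=
          Finset.sum_congr rfl fun t _ => by rw [hcol t]
      _ = NPmat n k i ⟨0, by omega⟩ * 1 := sum_mul_ite _ _ _
      _ = NPmat n (k + 1) i j := by
          simp only [NPmat, NPfun, Matrix.of_apply, mul_one]
          split_ifs <;> first | exact False.elim ‹False› | omega | (exfalso; omega) | norm_num
  · have hcol : ∀ t : Fin n, NPmat n 1 t j =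
        (if t = (⟨0, by omega⟩ : Fin n) then (1:ℝ) else 0)
          + (if t = (⟨1, by omega⟩ : Fin n) then (-1:ℝ) else 0) := by
      intro t
      simp only [NPmat, NPfun, Matrix.of_apply, Fin.ext_iff]
      split_ifs <;> first | exact False.elim ‹False› | omega | (exfalso; omega) | norm_num
    calc (∑ t : Fin n, NPmat n k i t * NPmat n 1 t j)
        = ∑ t : Fin n, ((NPmat n k i t * if t = (⟨0, by omega⟩ : Fin n) then (1:ℝ) else 0)
            + (NPmat n k i t * if t = (⟨1, by omega⟩ : Fin n) then (-1:ℝ) else 0)) := by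
          refine Finset.sum_congr rfl fun t _ => by rw [hcol t, mul_add]
      _ = NPmat n k i ⟨0, by omega⟩ * 1 + NPmat n k i ⟨1, by omega⟩ * (-1) := by
          rw [Finset.sum_add_distrib, sum_mul_ite, sum_mul_ite]
      _ = NPmat n (k + 1) i j := by
          simp only [NPmat, NPfun, Matrix.of_apply]
          split_ifs <;> first | exact False.elim ‹False› | omega | (exfalso; omega) | norm_num
  · have hcol : ∀ t : Fin n, NPmat n 1 t j =
        (if t = (⟨0, by omega⟩ : Fin n) then (1:ℝ) else 0)
          + (if t = (⟨1, by omega⟩ : Fin n) then (-1:ℝ) else 0)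
          + (if t = (⟨(j : ℕ) + 1, by omega⟩ : Fin n) then (1:ℝ) else 0) := by
      intro t
      simp only [NPmat, NPfun, Matrix.of_apply, Fin.ext_iff]
      split_ifs <;> first | exact False.elim ‹False› | omega | (exfalso; omega) | norm_num
    calc (∑ t : Fin n, NPmat n k i t * NPmat n 1 t j)
        = ∑ t : Fin n, (((NPmat n k i t * if t = (⟨0, by omega⟩ : Fin n) then (1:ℝ) else 0)
            + (NPmat n k i t * if t = (⟨1, by omega⟩ : Fin n) then (-1:ℝ) else 0))
            + (NPmat n k i t * if t = (⟨(j : ℕ) + 1, by omega⟩ : Fin n) then (1:ℝ) else 0)) := by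
          refine Finset.sum_congr rfl fun t _ => by rw [hcol t, mul_add, mul_add]
      _ = NPmat n k i ⟨0, by omega⟩ * 1 + NPmat n k i ⟨1, by omega⟩ * (-1)
            + NPmat n k i ⟨(j : ℕ) + 1, by omega⟩ * 1 := by
          rw [Finset.sum_add_distrib, Finset.sum_add_distrib, sum_mul_ite, sum_mul_ite,
            sum_mul_ite]
      _ = NPmat n (k + 1) i j := by
          simp only [NPmat, NPfun, Matrix.of_apply]
          split_ifs <;> first | exact False.elim ‹False› | omega | (exfalso; omega) | norm_num

lemma npow_eq {n : ℕ} (hn : 3 ≤ n) :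
    ∀ k, 1 ≤ k → k ≤ n → NPmat n 1 ^ k = NPmat n k := by
  intro k
  induction k with
  | zero => omega
  | succ k ih =>
    intro _ hk
    rcases Nat.eq_or_lt_of_le (by omega : 0 ≤ k) with h0 | h0
    · rw [← h0, pow_one]
    · rw [pow_succ, ih (by omega) (by omega), Nstep hn k (by omega) (by omega)]

lemma npow_n_eq_one {n : ℕ} (hn : 3 ≤ n) : NPmat n 1 ^ n = 1 := by
  rw [npow_eq hn n (by omega) le_rfl]
  ext i j
  rw [Matrix.one_apply]
  simp only [NPmat, NPfun, Matrix.of_apply, Fin.ext_iff]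
  split_ifs <;> first | exact False.elim ‹False› | omega | (exfalso; omega) | norm_num

lemma traceSC {n : ℕ} (hn : 3 ≤ n) : (SCmat n).trace = 2 * (n : ℝ) - 2 := by
  have h : ∀ i : Fin n, SCmat n i i
      = (if i = (⟨n - 2, by omega⟩ : Fin n) then 2 * (n : ℝ) - 3 else 0)
        + (if i = (⟨n - 1, by omega⟩ : Fin n) then (1 : ℝ) else 0) := by
    intro i
    simp only [SCmat, SCfun, Matrix.of_apply, Fin.ext_iff]
    split_ifs <;> first | exact False.elim ‹False› | omega | (exfalso; omega) | norm_num
  rw [Matrix.trace]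
  calc (∑ i : Fin n, (SCmat n).diag i)
      = ∑ i : Fin n, ((if i = (⟨n - 2, by omega⟩ : Fin n) then 2 * (n : ℝ) - 3 else 0)
          + (if i = (⟨n - 1, by omega⟩ : Fin n) then (1 : ℝ) else 0)) :=
        Finset.sum_congr rfl fun i _ => h i
    _ = (2 * (n : ℝ) - 3) + 1 := by
        rw [Finset.sum_add_distrib, Finset.sum_ite_eq' Finset.univ, Finset.sum_ite_eq'
          Finset.univ, if_pos (Finset.mem_univ _), if_pos (Finset.mem_univ _)]
    _ = 2 * (n : ℝ) - 2 := by ring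

end Npow
section Main

open Matrix Polynomial

theorem stmt8' (n : ℕ) (hn : 3 ≤ n) :
    specRad (DCmat n) = specRad (SCmat n) := by
  classical
  have hnz : (0 : ℕ) < n := by omega
  haveI : Nonempty (Fin n) := ⟨⟨0, hnz⟩⟩
  let f := algebraMap ℝ ℂ
  let e : Fin n ⊕ Fin n ≃ Fin (2 * n) := finSumFinEquiv.trans (finCongr (by omega : n + n = 2 * n))
  -- Step 1: reindex DC to block form
  have hblocks : (Matrix.reindexAlgEquiv ℂ ℂ e.symm) ((DCmat n).map f)
      = (Matrix.fromBlocks (Amat n) (Bmat n) (Cmat' n) (Dmat n)).map f := by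
    ext (i | i) (j | j) <;>
      simp [Matrix.reindexAlgEquiv_apply, Matrix.reindex_apply, Matrix.submatrix_apply,
        DCmat, Amat, Bmat, Cmat', Dmat, e, Matrix.map_apply, Equiv.symm_symm,
        finSumFinEquiv_apply_left, finSumFinEquiv_apply_right] <;>
      (try (congr 2 <;> omega))
  have hspec1 : spectrum ℂ ((DCmat n).map f)
      = spectrum ℂ ((Matrix.fromBlocks (Amat n) (Bmat n) (Cmat' n) (Dmat n)).map f) := by
    rw [← hblocks, AlgEquiv.spectrum_eq]
  -- Step 2: conjugate away S
  have hmapmul : ∀ (X Y : Matrix (Fin n ⊕ Fin n) (Fin n ⊕ Fin n) ℝ),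
      (X * Y).map f = X.map f * Y.map f := by
    intro X Y
    have := map_mul f.mapMatrix X Y
    simpa [RingHom.mapMatrix_apply] using this
  have hST : ((Matrix.fromBlocks (Amat n) (Bmat n) (Cmat' n) (Dmat n)).map f) * (SmatR n).map f
      = (SmatR n).map f * ((Matrix.fromBlocks (SCmat n) 0 0 (NPmat n 1)).map f) := by
    rw [← hmapmul, ← hmapmul, blocksR hn]
  have hSS : (SmatR n).map f * (SmatR n).map f
      = (2 : ℂ) • (1 : Matrix (Fin n ⊕ Fin n) (Fin n ⊕ Fin n) ℂ) := by
    rw [← hmapmul, SSR hn]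
    ext i j
    by_cases h : i = j <;>
      simp [Matrix.map_apply, Matrix.smul_apply, Matrix.one_apply, h, f]
  let u : (Matrix (Fin n ⊕ Fin n) (Fin n ⊕ Fin n) ℂ)ˣ :=
    { val := (SmatR n).map f
      inv := (2 : ℂ)⁻¹ • (SmatR n).map f
      val_inv := by rw [mul_smul_comm, hSS, smul_smul]; norm_num
      inv_val := by rw [smul_mul_assoc, hSS, smul_smul]; norm_num }
  have hconj : (Matrix.fromBlocks (Amat n) (Bmat n) (Cmat' n) (Dmat n)).map f
      = (↑u : Matrix (Fin n ⊕ Fin n) (Fin n ⊕ Fin n) ℂ)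
        * ((Matrix.fromBlocks (SCmat n) 0 0 (NPmat n 1)).map f)
        * (↑u⁻¹ : Matrix (Fin n ⊕ Fin n) (Fin n ⊕ Fin n) ℂ) := by
    rw [Units.eq_mul_inv_iff_mul_eq]
    exact hST
  have hspec2 : spectrum ℂ ((Matrix.fromBlocks (Amat n) (Bmat n) (Cmat' n) (Dmat n)).map f)
      = spectrum ℂ ((Matrix.fromBlocks (SCmat n) 0 0 (NPmat n 1)).map f) := by
    rw [hconj, spectrum.units_conjugate]
  -- Step 3: block-diagonal spectrum
  have hT : (Matrix.fromBlocks (SCmat n) 0 0 (NPmat n 1)).map f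
      = Matrix.fromBlocks ((SCmat n).map f) 0 0 ((NPmat n 1).map f) := by
    rw [Matrix.fromBlocks_map]
    congr 1 <;> try (ext i j; simp [Matrix.map_apply])
  have hspecU : spectrum ℂ ((DCmat n).map f)
      = spectrum ℂ ((SCmat n).map f) ∪ spectrum ℂ ((NPmat n 1).map f) := by
    rw [hspec1, hspec2, hT, spec_fromBlocks]
  -- Step 4: the N-part has all eigenvalues of modulus 1
  have hNpow : ((NPmat n 1).map f) ^ n = 1 := by
    have h1 : ((NPmat n 1).map f) ^ n = (NPmat n 1 ^ n).map f := by
      have := map_pow f.mapMatrix (NPmat n 1) n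
      simpa [RingHom.mapMatrix_apply] using this.symm
    rw [h1, npow_n_eq_one hn]
    exact Matrix.map_one f (map_zero f) (map_one f)
  have hNspec : ∀ z ∈ spectrum ℂ ((NPmat n 1).map f), ‖z‖ = 1 := by
    intro z hz
    have h1 : z ^ n ∈ spectrum ℂ (((NPmat n 1).map f) ^ n) :=
      spectrum.pow_image_subset ((NPmat n 1).map f) n ⟨z, hz, rfl⟩
    rw [hNpow] at h1
    have h2 : z ^ n = 1 := eq_one_of_mem_spectrum_one h1
    have h3 : (‖z‖) ^ n = 1 := by rw [← norm_pow, h2]; simp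
    rcases lt_trichotomy (‖z‖) 1 with h | h | h
    · have := pow_lt_one₀ (norm_nonneg z) h (by omega : n ≠ 0)
      rw [h3] at this; linarith
    · exact h
    · have := one_lt_pow₀ h (by omega : n ≠ 0)
      rw [h3] at this; linarith
  -- Step 5: SC has an eigenvalue of modulus at least 1
  have hlow : ∃ z ∈ spectrum ℂ ((SCmat n).map f), 1 ≤ ‖z‖ := by
    by_contra hcon
    push_neg at hcon
    have htr : ((SCmat n).map f).trace = ((2 * (n : ℝ) - 2 : ℝ) : ℂ) := by
      have h1 : ((SCmat n).map f).trace = f ((SCmat n).trace) := by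
        simp [Matrix.trace, Matrix.diag, Matrix.map_apply, map_sum]
      rw [h1, traceSC hn]
      rfl
    have hsum := Matrix.trace_eq_sum_roots_charpoly ((SCmat n).map f)
    have hcard : ((SCmat n).map f).charpoly.roots.card ≤ n := by
      refine le_trans (Polynomial.card_roots' _) ?_
      rw [Matrix.charpoly_natDegree_eq_dim, Fintype.card_fin]
    have hroot : ∀ r ∈ ((SCmat n).map f).charpoly.roots, ‖r‖ ≤ 1 := by
      intro r hr
      have hmem : r ∈ spectrum ℂ ((SCmat n).map f) := by
        rw [mem_spec_iff_det, ← eval_charpoly']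
        exact (Polynomial.mem_roots'.mp hr).2
      exact le_of_lt (hcon r hmem)
    have hb : ‖((SCmat n).map f).charpoly.roots.sum‖ ≤ (n : ℝ) := by
      calc ‖((SCmat n).map f).charpoly.roots.sum‖
          = ‖((SCmat n).map f).charpoly.roots.sum‖ := rfl
        _ ≤ ((((SCmat n).map f).charpoly.roots).map (fun z : ℂ => ‖z‖)).sum :=
            norm_multiset_sum_le _
        _ ≤ ((((SCmat n).map f).charpoly.roots).map (fun z : ℂ => ‖z‖)).card • (1 : ℝ) := by
            refine Multiset.sum_le_card_nsmul _ 1 ?_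
            intro x hx
            obtain ⟨r, hr, rfl⟩ := Multiset.mem_map.mp hx
            exact hroot r hr
        _ = (((SCmat n).map f).charpoly.roots.card : ℝ) := by
            rw [Multiset.card_map, nsmul_eq_mul, mul_one]
        _ ≤ (n : ℝ) := by exact_mod_cast hcard
    rw [← hsum, htr] at hb
    have h3 : (3 : ℝ) ≤ (n : ℝ) := by exact_mod_cast hn
    rw [Complex.norm_real, Real.norm_eq_abs, abs_of_nonneg (by linarith)] at hb
    linarith
  obtain ⟨z₀, hz₀, hz₀1⟩ := hlow
  -- Step 6: conclude
  have hAfin : {x : ℝ | ∃ z ∈ spectrum ℂ ((SCmat n).map f), ‖z‖ = x}.Finite :=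
    (spec_finite _).image (fun z : ℂ => ‖z‖)
  have hBfin : {x : ℝ | ∃ z ∈ spectrum ℂ ((NPmat n 1).map f), ‖z‖ = x}.Finite :=
    (spec_finite _).image (fun z : ℂ => ‖z‖)
  have hAbdd := hAfin.bddAbove
  have hsetU : {x : ℝ | ∃ z ∈ spectrum ℂ ((DCmat n).map f), ‖z‖ = x}
      = {x : ℝ | ∃ z ∈ spectrum ℂ ((SCmat n).map f), ‖z‖ = x}
        ∪ {x : ℝ | ∃ z ∈ spectrum ℂ ((NPmat n 1).map f), ‖z‖ = x} := by
    ext x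
    simp only [Set.mem_setOf_eq, Set.mem_union, hspecU]
    constructor
    · rintro ⟨z, hz | hz, rfl⟩
      exacts [Or.inl ⟨z, hz, rfl⟩, Or.inr ⟨z, hz, rfl⟩]
    · rintro (⟨z, hz, rfl⟩ | ⟨z, hz, rfl⟩)
      exacts [⟨z, Or.inl hz, rfl⟩, ⟨z, Or.inr hz, rfl⟩]
  show sSup _ = sSup _
  rw [hsetU]
  apply le_antisymm
  · refine csSup_le ⟨‖z₀‖, Or.inl ⟨z₀, hz₀, rfl⟩⟩ ?_
    rintro x (⟨z, hz, rfl⟩ | ⟨z, hz, rfl⟩)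
    · exact le_csSup hAbdd ⟨z, hz, rfl⟩
    · calc ‖z‖ = 1 := hNspec z hz
        _ ≤ ‖z₀‖ := hz₀1
        _ ≤ sSup {x : ℝ | ∃ z ∈ spectrum ℂ ((SCmat n).map f), ‖z‖ = x} :=
            le_csSup hAbdd ⟨z₀, hz₀, rfl⟩
  · exact csSup_le_csSup (hAfin.union hBfin).bddAbove ⟨‖z₀‖, z₀, hz₀, rfl⟩
      Set.subset_union_left

end Main

theorem stmt8 (n : ℕ) (hn : 3 ≤ n) :
    specRad (DCmat n) = specRad (SCmat n) := by
  exact stmt8' n hn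
end
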